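/- arXiv:2511.01672 — 6 statements merged into one kernel-verified Lean document; each statement's English description precedes it below -/
import Mathlib

section
/- Suppose P : ℝ → ℝ^{n×n} satisfies the backward Lyapunov ODE on [0,T]. Then for all τ₀, τ₁ with 0 ≤ τ₀ ≤ τ₁ ≤ T, writing Δτ := τ₁ − τ₀, one has the identity P(τ₀) − P(τ₁) = ∫₀^{Δτ} e^{A_ζᵀ·s}·CᵀC·e^{A_ζ·s} ds + e^{A_ζᵀ·Δτ}·P(τ₁)·e^{A_ζ·Δτ} − P(τ₁). -/
open Matrix

set_option maxHeartbeats 1000000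

noncomputable section

/-- A norm-free formulation of `HasDerivAt` via slopes (depends only on topology). -/
def SlopeDeriv {n : ℕ} (f : ℝ → Matrix (Fin n) (Fin n) ℝ)
    (f' : Matrix (Fin n) (Fin n) ℝ) (x : ℝ) : Prop :=
  Filter.Tendsto (slope f x) (nhdsWithin x {x}ᶜ) (nhds f')

section linftyAux

attribute [local instance] Matrix.linftyOpNormedRing Matrix.linftyOpNormedAlgebra

variable {n : ℕ}

lemma slopeDeriv_exp (B : Matrix (Fin n) (Fin n) ℝ) (t : ℝ) :
    SlopeDeriv (fun u : ℝ => NormedSpace.exp (u • B)) (NormedSpace.exp (t • B) * B) t :=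
  hasDerivAt_iff_tendsto_slope.mp (hasDerivAt_exp_smul_const B t)

/-- Key computation in the Banach-algebra (linfty) world. -/
lemma slopeDeriv_key (ζ : ℝ) (A : Matrix (Fin n) (Fin n) ℝ) (Cc : Matrix (Fin n) (Fin n) ℝ)
    (P : ℝ → Matrix (Fin n) (Fin n) ℝ) (τ₀ s : ℝ)
    (hP : SlopeDeriv P (-(Aᵀ * P (τ₀ + s) + P (τ₀ + s) * A + Cc + (2 * ζ) • P (τ₀ + s))) (τ₀ + s)) :
    SlopeDeriv
      (fun u : ℝ => NormedSpace.exp (u • (A + ζ • (1 : Matrix (Fin n) (Fin n) ℝ))ᵀ) * P (τ₀ + u) *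
        NormedSpace.exp (u • (A + ζ • (1 : Matrix (Fin n) (Fin n) ℝ))))
      (-(NormedSpace.exp (s • (A + ζ • (1 : Matrix (Fin n) (Fin n) ℝ))ᵀ) * Cc *
        NormedSpace.exp (s • (A + ζ • (1 : Matrix (Fin n) (Fin n) ℝ))))) s := by
  set B : Matrix (Fin n) (Fin n) ℝ := A + ζ • 1 with hB
  set Q : Matrix (Fin n) (Fin n) ℝ := P (τ₀ + s) with hQ
  have hP' : HasDerivAt P (-(Aᵀ * Q + Q * A + Cc + (2 * ζ) • Q)) (τ₀ + s) :=
    hasDerivAt_iff_tendsto_slope.mpr hP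
  have h2 : HasDerivAt (fun u : ℝ => P (τ₀ + u)) (-(Aᵀ * Q + Q * A + Cc + (2 * ζ) • Q)) s := by
    have := hP'.scomp (h := fun u : ℝ => τ₀ + u) (x := s)
      ((hasDerivAt_id s).const_add τ₀)
    rw [one_smul] at this; exact this
  have h1 : HasDerivAt (fun u : ℝ => NormedSpace.exp (u • Bᵀ))
      (NormedSpace.exp (s • Bᵀ) * Bᵀ) s := hasDerivAt_exp_smul_const Bᵀ s
  have h3 : HasDerivAt (fun u : ℝ => NormedSpace.exp (u • B))
      (B * NormedSpace.exp (s • B)) s := hasDerivAt_exp_smul_const' B s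
  have h := (h1.mul h2).mul h3
  apply hasDerivAt_iff_tendsto_slope.mp
  convert h using 1
  case e'_4 => rfl
  case e'_8 => rfl
  simp only [Pi.mul_apply]
  set E₁ := NormedSpace.exp (s • Bᵀ)
  set E₂ := NormedSpace.exp (s • B)
  have hBt : Bᵀ = Aᵀ + ζ • 1 := by
    rw [hB, transpose_add, transpose_smul, transpose_one]
  rw [hBt, hB]
  simp only [mul_add, add_mul, mul_smul_comm, smul_mul_assoc, mul_one, one_mul, neg_mul,
    mul_neg, mul_assoc]
  rw [← hQ]
  module

end linftyAux

attribute [local instance] Matrix.normedAddCommGroup Matrix.normedSpace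

section piAux

variable {n : ℕ}

lemma hasDerivAt_exp_pi (B : Matrix (Fin n) (Fin n) ℝ) (t : ℝ) :
    HasDerivAt (fun u : ℝ => NormedSpace.exp (u • B)) (NormedSpace.exp (t • B) * B) t :=
  hasDerivAt_iff_tendsto_slope.mpr (slopeDeriv_exp B t)

lemma continuous_exp_pi (B : Matrix (Fin n) (Fin n) ℝ) :
    Continuous (fun u : ℝ => NormedSpace.exp (u • B)) :=
  continuous_iff_continuousAt.mpr fun t => (hasDerivAt_exp_pi B t).continuousAt

end piAux

/-- Spectral norm (ℓ²-operator norm) of a square real matrix. -/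
noncomputable def sNorm {ι : Type*} [Fintype ι] [DecidableEq ι] (M : Matrix ι ι ℝ) : ℝ :=
  ‖Matrix.toEuclideanCLM (𝕜 := ℝ) M‖

/-- `S ≺ 0`: the quadratic form of `S` is negative on every nonzero vector. -/
def NegDef {ι : Type*} [Fintype ι] (S : Matrix ι ι ℝ) : Prop :=
  ∀ x : ι → ℝ, x ≠ 0 → x ⬝ᵥ S.mulVec x < 0

/-- The integral identity for solutions of the backward Lyapunov ODE (proof of Lemma 2). -/
theorem stmt1 {n p : ℕ} (hn : 1 ≤ n) (hp : 1 ≤ p) (T ζ : ℝ) (hT : 0 < T) (hζ : 0 < ζ)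
    (A : Matrix (Fin n) (Fin n) ℝ) (C : Matrix (Fin p) (Fin n) ℝ)
    (X : Matrix (Fin n) (Fin n) ℝ) (hX : X.PosDef)
    (P : ℝ → Matrix (Fin n) (Fin n) ℝ)
    (hP : ∀ t ∈ Set.Icc (0:ℝ) T,
        HasDerivAt P (-(Aᵀ * P t + P t * A + Cᵀ * C + (2 * ζ) • P t)) t)
    (hPT : P T = X)
    (τ₀ τ₁ : ℝ) (h0 : 0 ≤ τ₀) (h01 : τ₀ ≤ τ₁) (h1 : τ₁ ≤ T) :
    P τ₀ - P τ₁ =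
      (∫ s in (0:ℝ)..(τ₁ - τ₀),
        NormedSpace.exp (s • (A + ζ • (1 : Matrix (Fin n) (Fin n) ℝ))ᵀ) * (Cᵀ * C) *
          NormedSpace.exp (s • (A + ζ • (1 : Matrix (Fin n) (Fin n) ℝ))))
      + NormedSpace.exp ((τ₁ - τ₀) • (A + ζ • (1 : Matrix (Fin n) (Fin n) ℝ))ᵀ) * P τ₁ *
          NormedSpace.exp ((τ₁ - τ₀) • (A + ζ • (1 : Matrix (Fin n) (Fin n) ℝ)))
      - P τ₁ := by
  set B : Matrix (Fin n) (Fin n) ℝ := A + ζ • 1 with hB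
  set Δ : ℝ := τ₁ - τ₀ with hΔ
  have hΔ0 : 0 ≤ Δ := by simp [hΔ]; linarith
  set g : ℝ → Matrix (Fin n) (Fin n) ℝ := fun u =>
    NormedSpace.exp (u • Bᵀ) * P (τ₀ + u) * NormedSpace.exp (u • B) with hg
  set F : ℝ → Matrix (Fin n) (Fin n) ℝ := fun s =>
    NormedSpace.exp (s • Bᵀ) * (Cᵀ * C) * NormedSpace.exp (s • B) with hF
  have hcontF : Continuous F :=
    ((continuous_exp_pi Bᵀ).matrix_mul continuous_const).matrix_mul (continuous_exp_pi B)
  have hderiv : ∀ s ∈ Set.uIcc (0:ℝ) Δ, HasDerivAt g (-(F s)) s := by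
    intro s hs
    rw [Set.uIcc_of_le hΔ0] at hs
    have hmem : τ₀ + s ∈ Set.Icc (0:ℝ) T :=
      ⟨by linarith [hs.1], by have := hs.2; simp [hΔ] at this ⊢; linarith⟩
    have hPs := hP (τ₀ + s) hmem
    exact hasDerivAt_iff_tendsto_slope.mpr
      (slopeDeriv_key ζ A (Cᵀ * C) P τ₀ s (hasDerivAt_iff_tendsto_slope.mp hPs))
  have hFTC := intervalIntegral.integral_eq_sub_of_hasDerivAt hderiv
    ((hcontF.neg).intervalIntegrable 0 Δ)
  have hg0 : g 0 = P τ₀ := by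
    simp [hg, zero_smul, NormedSpace.exp_zero]
  have hgΔ : g Δ = NormedSpace.exp (Δ • Bᵀ) * P τ₁ * NormedSpace.exp (Δ • B) := by
    have : τ₀ + Δ = τ₁ := by simp [hΔ]
    simp [hg, this]
  rw [intervalIntegral.integral_neg, hg0, hgΔ] at hFTC
  have hI : (∫ s in (0:ℝ)..Δ, F s) =
      P τ₀ - NormedSpace.exp (Δ • Bᵀ) * P τ₁ * NormedSpace.exp (Δ • B) := by
    have := neg_eq_iff_eq_neg.mp hFTC
    rw [this]; abel
  rw [hI]; abel
end
end

section
/- Suppose P : ℝ → ℝ^{n×n} satisfies the backward Lyapunov ODE on [0,T]. Let ε > 0 and let μ > 0 be such that ϑ(μ) < ε. Then for all τ₀, τ₁ with 0 ≤ τ₀ ≤ τ₁ ≤ T and τ₁ − τ₀ < μ, it holds that ‖P(τ₁) − P(τ₀)‖ < ε. -/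
open Matrix

noncomputable section

attribute [local instance] Matrix.normedAddCommGroup Matrix.normedSpace

/-- The modulus-of-continuity bound ϑ(μ) from Lemma 2 of the paper. -/
noncomputable def vartheta {n p : ℕ} (T ζ : ℝ) (A : Matrix (Fin n) (Fin n) ℝ)
    (C : Matrix (Fin p) (Fin n) ℝ) (X : Matrix (Fin n) (Fin n) ℝ) (μ : ℝ) : ℝ :=
  let a := sNorm (A + ζ • (1 : Matrix (Fin n) (Fin n) ℝ))
  let PP := (sNorm X + T * sNorm (Cᵀ * C)) * Real.exp (2 * T * a)
  μ * Real.exp (2 * a * μ) * sNorm (Cᵀ * C) +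
    (2 * (Real.exp (a * μ) - 1) + (Real.exp (a * μ) - 1) ^ 2) * PP

set_option maxHeartbeats 1000000
set_option synthInstance.maxHeartbeats 400000

lemma myexp_sub_one_le (x : ℝ) : Real.exp x - 1 ≤ x * Real.exp x := by
  have h1 : Real.exp (-x) * Real.exp x = 1 := by rw [← Real.exp_add]; simp
  nlinarith [Real.add_one_le_exp (-x), Real.exp_pos x]

lemma mygronwall_le (δ K c T' s : ℝ) (hδ : 0 ≤ δ) (hK : 0 ≤ K) (hc : 0 ≤ c)
    (hs : 0 ≤ s) (hsT : s ≤ T') :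
    gronwallBound δ K c s ≤ (δ + T' * c) * Real.exp (K * T') := by
  have hT' : 0 ≤ T' := le_trans hs hsT
  have h1 : Real.exp (K * s) ≤ Real.exp (K * T') := Real.exp_le_exp.2 (by nlinarith)
  have he1 : 1 ≤ Real.exp (K * T') := Real.one_le_exp (by positivity)
  rcases eq_or_lt_of_le hK with h0 | hKpos
  · rw [← h0, gronwallBound_K0]
    simp only [zero_mul, Real.exp_zero, mul_one]
    nlinarith
  · rw [gronwallBound_of_K_ne_0 hKpos.ne']
    have key : Real.exp (K*s) - 1 ≤ (K*s) * Real.exp (K*s) := myexp_sub_one_le _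
    have h2 : c / K * (Real.exp (K*s) - 1) ≤ c * (s * Real.exp (K*s)) := by
      calc c / K * (Real.exp (K*s) - 1) ≤ c / K * ((K*s) * Real.exp (K*s)) :=
            mul_le_mul_of_nonneg_left key (div_nonneg hc hKpos.le)
        _ = c * (s * Real.exp (K*s)) := by field_simp
    have h3 : s * Real.exp (K*s) ≤ T' * Real.exp (K*T') :=
      mul_le_mul hsT h1 (by positivity) hT'
    have h4 : δ * Real.exp (K*s) ≤ δ * Real.exp (K*T') :=
      mul_le_mul_of_nonneg_left h1 hδ
    nlinarith

lemma sNorm_transpose {n : ℕ} (M : Matrix (Fin n) (Fin n) ℝ) : sNorm Mᵀ = sNorm M := by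
  have h : Mᵀ = star M := by
    rw [Matrix.star_eq_conjTranspose]; ext i j; simp [Matrix.conjTranspose_apply]
  rw [sNorm, sNorm, h, map_star, ContinuousLinearMap.star_eq_adjoint]
  exact LinearIsometryEquiv.norm_map ContinuousLinearMap.adjoint _

/-- The map `toEuclideanCLM` as a continuous linear map. -/
noncomputable def phiCLM (n : ℕ) :
    Matrix (Fin n) (Fin n) ℝ →L[ℝ] (EuclideanSpace ℝ (Fin n) →L[ℝ] EuclideanSpace ℝ (Fin n)) :=
  LinearMap.toContinuousLinearMap
  { toFun := fun M => Matrix.toEuclideanCLM (𝕜 := ℝ) M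
    map_add' := fun x y => map_add _ x y
    map_smul' := fun c x => map_smul _ c x }

/-- Lemma 2 of the paper: uniform continuity bound for solutions of the backward
Lyapunov ODE. -/
theorem stmt2 {n p : ℕ} (hn : 1 ≤ n) (hp : 1 ≤ p) (T ζ : ℝ) (hT : 0 < T) (hζ : 0 < ζ)
    (A : Matrix (Fin n) (Fin n) ℝ) (C : Matrix (Fin p) (Fin n) ℝ)
    (X : Matrix (Fin n) (Fin n) ℝ) (hX : X.PosDef)
    (P : ℝ → Matrix (Fin n) (Fin n) ℝ)
    (hP : ∀ t ∈ Set.Icc (0:ℝ) T,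
        HasDerivAt P (-(Aᵀ * P t + P t * A + Cᵀ * C + (2 * ζ) • P t)) t)
    (hPT : P T = X)
    (ε μ : ℝ) (hε : 0 < ε) (hμ : 0 < μ) (hϑ : vartheta T ζ A C X μ < ε) :
    ∀ τ₀ τ₁ : ℝ, 0 ≤ τ₀ → τ₀ ≤ τ₁ → τ₁ ≤ T → τ₁ - τ₀ < μ →
      sNorm (P τ₁ - P τ₀) < ε := by
  intro τ₀ τ₁ h0 h01 h1T hδμ
  set φ : Matrix (Fin n) (Fin n) ℝ → (EuclideanSpace ℝ (Fin n) →L[ℝ] EuclideanSpace ℝ (Fin n)) :=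
    fun M => Matrix.toEuclideanCLM (𝕜 := ℝ) M with hφ
  set Az : Matrix (Fin n) (Fin n) ℝ := A + ζ • (1 : Matrix (Fin n) (Fin n) ℝ) with hAzdef
  set a : ℝ := sNorm Az with ha
  set c : ℝ := sNorm (Cᵀ * C) with hc
  have ha0 : 0 ≤ a := norm_nonneg _
  have hc0 : 0 ≤ c := norm_nonneg _
  have hX0 : 0 ≤ sNorm X := norm_nonneg _
  set PP : ℝ := (sNorm X + T * c) * Real.exp (2 * T * a) with hPPdef
  have hPP0 : 0 ≤ PP :=
    mul_nonneg (by nlinarith) (Real.exp_pos _).le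
  -- derivative of f := φ ∘ P
  have hf : ∀ t ∈ Set.Icc (0:ℝ) T,
      HasDerivAt (fun t => φ (P t))
        (-(φ Azᵀ * φ (P t) + φ (P t) * φ Az + φ (Cᵀ * C))) t := by
    intro t ht
    have h1 := (phiCLM n).hasFDerivAt.comp_hasDerivAt t (hP t ht)
    convert h1 using 1
    · rfl
    · rfl
    · rfl
    · rfl
    have hrw : Aᵀ * P t + P t * A + Cᵀ * C + (2 * ζ) • P t
        = Azᵀ * P t + P t * Az + Cᵀ * C := by
      rw [hAzdef, Matrix.transpose_add, Matrix.transpose_smul, Matrix.transpose_one,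
        Matrix.add_mul, Matrix.mul_add, Matrix.smul_mul, Matrix.mul_smul,
        Matrix.one_mul, Matrix.mul_one, two_mul, add_smul]
      abel
    show -(φ Azᵀ * φ (P t) + φ (P t) * φ Az + φ (Cᵀ * C))
        = phiCLM n (-(Aᵀ * P t + P t * A + Cᵀ * C + (2 * ζ) • P t))
    rw [hrw]
    show -(φ Azᵀ * φ (P t) + φ (P t) * φ Az + φ (Cᵀ * C))
        = φ (-(Azᵀ * P t + P t * Az + Cᵀ * C))
    rw [hφ]
    simp only [map_neg, map_add, _root_.map_mul]
  -- norm bound on the derivative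
  have hfb : ∀ t, ‖-(φ Azᵀ * φ (P t) + φ (P t) * φ Az + φ (Cᵀ * C))‖
      ≤ 2 * a * ‖φ (P t)‖ + c := by
    intro t
    rw [norm_neg]
    have hT1 : ‖φ Azᵀ‖ = a := sNorm_transpose Az
    have e1 := norm_add_le (φ Azᵀ * φ (P t) + φ (P t) * φ Az) (φ (Cᵀ * C))
    have e2 := norm_add_le (φ Azᵀ * φ (P t)) (φ (P t) * φ Az)
    have e3 := norm_mul_le (φ Azᵀ) (φ (P t))
    have e4 := norm_mul_le (φ (P t)) (φ Az)
    have hca : ‖φ (Cᵀ * C)‖ = c := rfl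
    have haa : ‖φ Az‖ = a := rfl
    rw [hT1] at e3
    rw [haa] at e4
    rw [hca] at e1
    nlinarith
  -- Gronwall on g s = φ (P (T - s))
  have hgd : ∀ s ∈ Set.Icc (0:ℝ) T,
      HasDerivAt (fun s => φ (P (T - s)))
        ((φ Azᵀ * φ (P (T - s)) + φ (P (T - s)) * φ Az + φ (Cᵀ * C))) s := by
    intro s hs
    have hts : T - s ∈ Set.Icc (0:ℝ) T := ⟨by linarith [hs.2], by linarith [hs.1]⟩
    have hcomp := HasDerivAt.scomp s (hf _ hts) ((hasDerivAt_id s).const_sub T)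
    have heq : ((-1 : ℝ) • (-(φ Azᵀ * φ (P (T - s)) + φ (P (T - s)) * φ Az + φ (Cᵀ * C))))
        = (φ Azᵀ * φ (P (T - s)) + φ (P (T - s)) * φ Az + φ (Cᵀ * C)) := by
      module
    rw [← heq]
    exact hcomp
  have hGron := norm_le_gronwallBound_of_norm_deriv_right_le (a := (0:ℝ)) (b := T)
    (δ := sNorm X) (K := 2 * a) (ε := c)
    (f := fun s => φ (P (T - s)))
    (f' := fun s => (φ Azᵀ * φ (P (T - s)) + φ (P (T - s)) * φ Az + φ (Cᵀ * C)))
    (fun s hs => ((hgd s hs).continuousAt).continuousWithinAt)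
    (fun s hs => ((hgd s (Set.Ico_subset_Icc_self hs)).hasDerivWithinAt))
    (by
      show ‖φ (P (T - 0))‖ ≤ sNorm X
      rw [sub_zero, hPT]
      exact le_rfl)
    (fun s hs => by
      have h := hfb (T - s)
      rw [norm_neg] at h
      exact h)
  -- uniform bound on ‖φ (P t)‖
  have PB : ∀ t ∈ Set.Icc (0:ℝ) T, ‖φ (P t)‖ ≤ PP := by
    intro t ht
    have hmem : T - t ∈ Set.Icc (0:ℝ) T := ⟨by linarith [ht.2], by linarith [ht.1]⟩
    have h1 := hGron (T - t) hmem
    have h2 : (fun s => φ (P (T - s))) (T - t) = φ (P t) := by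
      simp [sub_sub_cancel]
    rw [sub_sub_cancel, sub_zero] at h1
    refine le_trans h1 ?_
    have := mygronwall_le (sNorm X) (2 * a) c T (T - t) hX0 (by positivity) hc0
      (by linarith [ht.2]) (by linarith [ht.1])
    rw [hPPdef]
    have hre : 2 * a * T = 2 * T * a := by ring
    rw [← hre]
    exact this
  -- mean value inequality on [0, T]
  have hτ₀ : τ₀ ∈ Set.Icc (0:ℝ) T := ⟨h0, le_trans h01 h1T⟩
  have hτ₁ : τ₁ ∈ Set.Icc (0:ℝ) T := ⟨le_trans h0 h01, h1T⟩
  have hMV := Convex.norm_image_sub_le_of_norm_hasDerivWithin_le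
    (f := fun t => φ (P t))
    (f' := fun t => -(φ Azᵀ * φ (P t) + φ (P t) * φ Az + φ (Cᵀ * C)))
    (C := 2 * a * PP + c) (s := Set.Icc (0:ℝ) T)
    (fun t ht => (hf t ht).hasDerivWithinAt)
    (fun t ht => by
      have h1 := hfb t
      have h2 := PB t ht
      nlinarith [mul_nonneg ha0 (sub_nonneg.2 h2)])
    (convex_Icc 0 T) hτ₀ hτ₁
  have hnn : 0 ≤ 2 * a * PP + c := by nlinarith
  have hnorm : sNorm (P τ₁ - P τ₀) = ‖φ (P τ₁) - φ (P τ₀)‖ := by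
    rw [sNorm]
    exact congrArg norm (map_sub (Matrix.toEuclideanCLM (𝕜 := ℝ)) _ _)
  have habs : ‖τ₁ - τ₀‖ = τ₁ - τ₀ := Real.norm_of_nonneg (by linarith)
  have hϑ' : μ * Real.exp (2 * a * μ) * c
      + (2 * (Real.exp (a * μ) - 1) + (Real.exp (a * μ) - 1) ^ 2) * PP < ε := hϑ
  have hle : (2 * a * PP + c) * μ ≤ μ * Real.exp (2 * a * μ) * c
      + (2 * (Real.exp (a * μ) - 1) + (Real.exp (a * μ) - 1) ^ 2) * PP := by
    have e1 : 1 ≤ Real.exp (2 * a * μ) := Real.one_le_exp (by positivity)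
    have e2 : a * μ + 1 ≤ Real.exp (a * μ) := Real.add_one_le_exp _
    nlinarith [mul_nonneg (mul_nonneg hμ.le hc0) (sub_nonneg.2 e1),
      mul_nonneg hPP0 (sub_nonneg.2 (show a * μ ≤ Real.exp (a * μ) - 1 by linarith)),
      mul_nonneg hPP0 (sq_nonneg (Real.exp (a * μ) - 1))]
  calc sNorm (P τ₁ - P τ₀) = ‖φ (P τ₁) - φ (P τ₀)‖ := hnorm
    _ ≤ (2 * a * PP + c) * ‖τ₁ - τ₀‖ := hMV
    _ = (2 * a * PP + c) * (τ₁ - τ₀) := by rw [habs]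
    _ ≤ (2 * a * PP + c) * μ := mul_le_mul_of_nonneg_left hδμ.le hnn
    _ ≤ _ := hle
    _ < ε := hϑ'
end
end

section
/- Suppose P : ℝ → ℝ^{n×n} satisfies the backward Lyapunov ODE on [0,T] and P(t) is symmetric for every t ∈ [0,T]. Let ε > 0 and let μ > 0 satisfy ϑ(μ) < ε / (2·(ζ − α + ‖L·D‖)). Then for all τ₀, τ₁ with 0 ≤ τ₀ ≤ τ₁ ≤ T and τ₁ − τ₀ < μ, it holds that ‖Ψ(τ₁) − Ψ(τ₀)‖ < ε. -/
open Matrix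

noncomputable section

attribute [local instance] Matrix.normedAddCommGroup Matrix.normedSpace

/-- The 4n×4n symmetric block matrix Ψ from the paper (eq. (10)), as a function of
the tuning parameters and of the value `Pt = P(t)`. -/
noncomputable def Psi {n m : ℕ}
    (A : Matrix (Fin n) (Fin n) ℝ) (D : Matrix (Fin m) (Fin n) ℝ)
    (L : Matrix (Fin n) (Fin m) ℝ) (Q W : Matrix (Fin n) (Fin n) ℝ)
    (ζ α h γ κ : ℝ) (Pt : Matrix (Fin n) (Fin n) ℝ) :
    Matrix (Fin 4 × Fin n) (Fin 4 × Fin n) ℝ :=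
  let U := A - L * D
  let c := h ^ 2 * Real.exp (2 * α * h)
  let Ψ11 := (-(2 * (ζ - α))) • Pt + (γ * κ ^ 2) • (1 : Matrix (Fin n) (Fin n) ℝ)
  let Ψ12 := Pt * L * D + (γ * κ ^ 2) • (1 : Matrix (Fin n) (Fin n) ℝ)
  let Ψ13 := -(Pt * L * D)
  let Ψ14 : Matrix (Fin n) (Fin n) ℝ := 0
  let Ψ22 := Uᵀ * Q + Q * U + (2 * α) • Q + (γ * κ ^ 2) • (1 : Matrix (Fin n) (Fin n) ℝ)
      + c • (Uᵀ * W * U)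
  let Ψ23 := Q * L * D + c • (Uᵀ * W * L * D)
  let Ψ24 := Q + c • (Uᵀ * W)
  let Ψ33 := (-(Real.pi ^ 2 / 4)) • W + c • (Dᵀ * Lᵀ * W * L * D)
  let Ψ34 := c • (Dᵀ * Lᵀ * W)
  let Ψ44 := (-γ) • (1 : Matrix (Fin n) (Fin n) ℝ) + c • W
  fun q r =>
    (!![Ψ11, Ψ12, Ψ13, Ψ14;
        Ψ12ᵀ, Ψ22, Ψ23, Ψ24;
        Ψ13ᵀ, Ψ23ᵀ, Ψ33, Ψ34;
        Ψ14ᵀ, Ψ24ᵀ, Ψ34ᵀ, Ψ44] q.1 r.1) q.2 r.2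


set_option synthInstance.maxHeartbeats 1000000
set_option maxHeartbeats 4000000

section Aux

lemma sNorm_nonneg {ι : Type*} [Fintype ι] [DecidableEq ι] (M : Matrix ι ι ℝ) : 0 ≤ sNorm M :=
  norm_nonneg _

lemma sNorm_transpose_s4 {ι : Type*} [Fintype ι] [DecidableEq ι] (M : Matrix ι ι ℝ) :
    sNorm Mᵀ = sNorm M := by
  unfold sNorm
  rw [← Matrix.conjTranspose_eq_transpose_of_trivial, ← Matrix.star_eq_conjTranspose, map_star,
    ContinuousLinearMap.star_eq_adjoint]
  exact ContinuousLinearMap.adjoint.norm_map _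

lemma sNorm_add_le {ι : Type*} [Fintype ι] [DecidableEq ι] (M N : Matrix ι ι ℝ) :
    sNorm (M + N) ≤ sNorm M + sNorm N := by
  unfold sNorm; rw [map_add]; exact norm_add_le _ _

lemma sNorm_mul_le {ι : Type*} [Fintype ι] [DecidableEq ι] (M N : Matrix ι ι ℝ) :
    sNorm (M * N) ≤ sNorm M * sNorm N := by
  unfold sNorm; rw [_root_.map_mul]; exact norm_mul_le _ _

lemma sNorm_neg {ι : Type*} [Fintype ι] [DecidableEq ι] (M : Matrix ι ι ℝ) :
    sNorm (-M) = sNorm M := by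
  unfold sNorm; rw [map_neg, norm_neg]

lemma sNorm_smul {ι : Type*} [Fintype ι] [DecidableEq ι] (c : ℝ) (M : Matrix ι ι ℝ) :
    sNorm (c • M) = |c| * sNorm M := by
  unfold sNorm
  rw [_root_.map_smul]
  rw [show |c| = ‖c‖ from (Real.norm_eq_abs c).symm]
  exact norm_smul c (Matrix.toEuclideanCLM (𝕜 := ℝ) M)

lemma sNorm_apply_le {ι : Type*} [Fintype ι] [DecidableEq ι] (M : Matrix ι ι ℝ)
    (x : EuclideanSpace ℝ ι) : ‖Matrix.toEuclideanCLM (𝕜 := ℝ) M x‖ ≤ sNorm M * ‖x‖ :=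
  ContinuousLinearMap.le_opNorm _ x

lemma toEuclideanCLM_apply {ι : Type*} [Fintype ι] [DecidableEq ι] (M : Matrix ι ι ℝ)
    (x : EuclideanSpace ℝ ι) (i : ι) :
    Matrix.toEuclideanCLM (𝕜 := ℝ) M x i = ∑ j, M i j * x j := rfl

noncomputable def blk {n : ℕ} (x : EuclideanSpace ℝ (Fin 4 × Fin n)) (r : Fin 4) :
    EuclideanSpace ℝ (Fin n) := WithLp.toLp 2 (fun j => x (r, j))

lemma normsq_blocks {n : ℕ} (x : EuclideanSpace ℝ (Fin 4 × Fin n)) :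
    ‖x‖ ^ 2 = ∑ r : Fin 4, ‖blk x r‖ ^ 2 := by
  rw [PiLp.norm_sq_eq_of_L2, Fintype.sum_prod_type]
  exact Finset.sum_congr rfl fun r _ =>
    (PiLp.norm_sq_eq_of_L2 (fun _ : Fin n => ℝ) (blk x r)).symm

lemma norm_le_of_sq_le_sq {a b : ℝ} (hb : 0 ≤ b) (ha : 0 ≤ a) (h : a ^ 2 ≤ b ^ 2) : a ≤ b := by
  nlinarith

lemma sNorm_pair {n : ℕ} (q₀ r₀ : Fin 4) (hqr : q₀ ≠ r₀) (M N : Matrix (Fin n) (Fin n) ℝ)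
    (hN : sNorm N ≤ sNorm M) :
    sNorm (Matrix.of fun qi rj : Fin 4 × Fin n =>
      if qi.1 = q₀ ∧ rj.1 = r₀ then M qi.2 rj.2
      else if qi.1 = r₀ ∧ rj.1 = q₀ then N qi.2 rj.2 else 0) ≤ sNorm M := by
  set Z : Matrix (Fin 4 × Fin n) (Fin 4 × Fin n) ℝ := Matrix.of fun qi rj =>
      if qi.1 = q₀ ∧ rj.1 = r₀ then M qi.2 rj.2
      else if qi.1 = r₀ ∧ rj.1 = q₀ then N qi.2 rj.2 else 0 with hZ
  refine ContinuousLinearMap.opNorm_le_bound _ (sNorm_nonneg M) fun x => ?_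
  refine norm_le_of_sq_le_sq (mul_nonneg (sNorm_nonneg M) (norm_nonneg x)) (norm_nonneg _) ?_
  have key : ∀ q : Fin 4, blk (Matrix.toEuclideanCLM (𝕜 := ℝ) Z x) q =
      if q = q₀ then Matrix.toEuclideanCLM (𝕜 := ℝ) M (blk x r₀)
      else if q = r₀ then Matrix.toEuclideanCLM (𝕜 := ℝ) N (blk x q₀) else 0 := by
    intro q
    ext i
    show Matrix.toEuclideanCLM (𝕜 := ℝ) Z x (q, i) = _
    rw [toEuclideanCLM_apply]
    by_cases hq : q = q₀
    · subst hq
      simp only [hZ, Matrix.of_apply, Fintype.sum_prod_type, hqr, false_and, if_false, if_pos,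
        true_and, ite_mul, zero_mul]
      rw [Finset.sum_comm]
      simp [Matrix.mulVec, dotProduct, Finset.sum_ite_eq, toEuclideanCLM_apply, blk, hqr]
    · by_cases hq' : q = r₀
      · subst hq'
        simp only [hZ, Matrix.of_apply, Fintype.sum_prod_type, Ne.symm hqr, hq, false_and,
          if_false, true_and, ite_mul, zero_mul]
        simp [Matrix.mulVec, dotProduct, Finset.sum_ite_eq, toEuclideanCLM_apply, blk, hq, Ne.symm hqr]
      · simp [hZ, Fintype.sum_prod_type, hq, hq', toEuclideanCLM_apply]
  have hx : ∀ r : Fin 4, ‖blk x r‖ ^ 2 ≤ ‖x‖ ^ 2 := by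
    intro r
    rw [normsq_blocks x]
    exact Finset.single_le_sum (f := fun r => ‖blk x r‖ ^ 2)
      (fun r _ => sq_nonneg _) (Finset.mem_univ r)
  calc ‖Matrix.toEuclideanCLM (𝕜 := ℝ) Z x‖ ^ 2
      = ∑ q : Fin 4, ‖blk (Matrix.toEuclideanCLM (𝕜 := ℝ) Z x) q‖ ^ 2 := normsq_blocks _
    _ ≤ ∑ q : Fin 4, (sNorm M) ^ 2 * ‖blk x (Equiv.swap q₀ r₀ q)‖ ^ 2 := by
        refine Finset.sum_le_sum fun q _ => ?_
        rw [key q]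
        by_cases hq : q = q₀
        · subst hq
          rw [if_pos rfl, Equiv.swap_apply_left, ← mul_pow]
          exact pow_le_pow_left₀ (norm_nonneg _) (sNorm_apply_le M _) 2
        · by_cases hq' : q = r₀
          · subst hq'
            rw [if_neg hq, if_pos rfl, Equiv.swap_apply_right, ← mul_pow]
            refine pow_le_pow_left₀ (norm_nonneg _) ?_ 2
            exact (sNorm_apply_le N _).trans (mul_le_mul_of_nonneg_right hN (norm_nonneg _))
          · rw [if_neg hq, if_neg hq', norm_zero, zero_pow (by norm_num : (2:ℕ) ≠ 0)]
            positivity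
    _ = (sNorm M) ^ 2 * ∑ q : Fin 4, ‖blk x (Equiv.swap q₀ r₀ q)‖ ^ 2 := by
        rw [Finset.mul_sum]
    _ = (sNorm M) ^ 2 * ∑ q : Fin 4, ‖blk x q‖ ^ 2 := by
        rw [Equiv.sum_comp (Equiv.swap q₀ r₀) (fun q => ‖blk x q‖ ^ 2)]
    _ = (sNorm M * ‖x‖) ^ 2 := by rw [← normsq_blocks x, mul_pow]

lemma sNorm_single {n : ℕ} (q₀ r₀ : Fin 4) (M : Matrix (Fin n) (Fin n) ℝ) :
    sNorm (Matrix.of fun qi rj : Fin 4 × Fin n =>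
      if qi.1 = q₀ ∧ rj.1 = r₀ then M qi.2 rj.2 else 0) ≤ sNorm M := by
  set Z : Matrix (Fin 4 × Fin n) (Fin 4 × Fin n) ℝ := Matrix.of fun qi rj =>
      if qi.1 = q₀ ∧ rj.1 = r₀ then M qi.2 rj.2 else 0 with hZ
  refine ContinuousLinearMap.opNorm_le_bound _ (sNorm_nonneg M) fun x => ?_
  refine norm_le_of_sq_le_sq (mul_nonneg (sNorm_nonneg M) (norm_nonneg x)) (norm_nonneg _) ?_
  have key : ∀ q : Fin 4, blk (Matrix.toEuclideanCLM (𝕜 := ℝ) Z x) q =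
      if q = q₀ then Matrix.toEuclideanCLM (𝕜 := ℝ) M (blk x r₀) else 0 := by
    intro q
    ext i
    show Matrix.toEuclideanCLM (𝕜 := ℝ) Z x (q, i) = _
    rw [toEuclideanCLM_apply]
    by_cases hq : q = q₀
    · subst hq
      simp only [hZ, Matrix.of_apply, Fintype.sum_prod_type, true_and, ite_mul, zero_mul,
        if_pos rfl]
      rw [Finset.sum_comm]
      simp [Matrix.mulVec, dotProduct, Finset.sum_ite_eq, toEuclideanCLM_apply, blk]
    · simp [hZ, Fintype.sum_prod_type, hq]
  have hx : ‖blk x r₀‖ ^ 2 ≤ ‖x‖ ^ 2 := by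
    rw [normsq_blocks x]
    exact Finset.single_le_sum (f := fun r => ‖blk x r‖ ^ 2)
      (fun r _ => sq_nonneg _) (Finset.mem_univ r₀)
  calc ‖Matrix.toEuclideanCLM (𝕜 := ℝ) Z x‖ ^ 2
      = ∑ q : Fin 4, ‖blk (Matrix.toEuclideanCLM (𝕜 := ℝ) Z x) q‖ ^ 2 := normsq_blocks _
    _ = ∑ q : Fin 4, if q = q₀ then ‖Matrix.toEuclideanCLM (𝕜 := ℝ) M (blk x r₀)‖ ^ 2 else 0 := by
        refine Finset.sum_congr rfl fun q _ => ?_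
        rw [key q]
        by_cases hq : q = q₀
        · rw [if_pos hq, if_pos hq]
        · rw [if_neg hq, if_neg hq, norm_zero, zero_pow (by norm_num : (2:ℕ) ≠ 0)]
    _ = ‖Matrix.toEuclideanCLM (𝕜 := ℝ) M (blk x r₀)‖ ^ 2 := by
        simp [Finset.sum_ite_eq]
    _ ≤ (sNorm M * ‖blk x r₀‖) ^ 2 :=
        pow_le_pow_left₀ (norm_nonneg _) (sNorm_apply_le M _) 2
    _ ≤ (sNorm M * ‖x‖) ^ 2 := by
        rw [mul_pow, mul_pow]
        exact mul_le_mul_of_nonneg_left hx (sq_nonneg _)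

lemma Psi_sub_decomp {n m : ℕ}
    (A : Matrix (Fin n) (Fin n) ℝ) (D : Matrix (Fin m) (Fin n) ℝ)
    (L : Matrix (Fin n) (Fin m) ℝ) (Q W : Matrix (Fin n) (Fin n) ℝ)
    (ζ α h γ κ : ℝ) (P₁ P₀ : Matrix (Fin n) (Fin n) ℝ) :
    Psi A D L Q W ζ α h γ κ P₁ - Psi A D L Q W ζ α h γ κ P₀ =
      (Matrix.of fun qi rj : Fin 4 × Fin n =>
        if qi.1 = 0 ∧ rj.1 = 0 then ((-(2 * (ζ - α))) • (P₁ - P₀)) qi.2 rj.2 else 0)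
      + (Matrix.of fun qi rj : Fin 4 × Fin n =>
        if qi.1 = 0 ∧ rj.1 = 1 then ((P₁ - P₀) * L * D) qi.2 rj.2
        else if qi.1 = 1 ∧ rj.1 = 0 then ((P₁ - P₀) * L * D)ᵀ qi.2 rj.2 else 0)
      + (Matrix.of fun qi rj : Fin 4 × Fin n =>
        if qi.1 = 0 ∧ rj.1 = 2 then (-((P₁ - P₀) * L * D)) qi.2 rj.2
        else if qi.1 = 2 ∧ rj.1 = 0 then (-((P₁ - P₀) * L * D))ᵀ qi.2 rj.2 else 0) := by
  have key : ∀ Pt : Matrix (Fin n) (Fin n) ℝ, ∀ i j : Fin n,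
      (Dᵀ * (Lᵀ * Ptᵀ)) i j = (Pt * L * D) j i := by
    intro Pt i j
    have e : Dᵀ * (Lᵀ * Ptᵀ) = (Pt * L * D)ᵀ := by
      rw [Matrix.transpose_mul, Matrix.transpose_mul]
    rw [e, Matrix.transpose_apply]
  ext ⟨q, i⟩ ⟨r, j⟩
  rw [Matrix.sub_apply]
  simp only [Psi, Matrix.of_apply, Matrix.add_apply]
  fin_cases q <;> fin_cases r <;>
    (simp only [Fin.isValue, Fin.reduceFinMk, Matrix.cons_val, Fin.reduceEq, and_true, true_and,
      and_false, false_and, if_true, if_false, Matrix.transpose_apply, Matrix.neg_apply,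
      Matrix.sub_apply, Matrix.smul_apply, Matrix.zero_apply, smul_eq_mul, add_zero, zero_add,
      sub_self, Matrix.add_apply, Matrix.sub_mul, key] <;> ring)
  all_goals (simp only [key]; try ring)

/-- `toEuclideanCLM` as a continuous linear map. -/
noncomputable def matCLM (n : ℕ) :
    Matrix (Fin n) (Fin n) ℝ →L[ℝ] (EuclideanSpace ℝ (Fin n) →L[ℝ] EuclideanSpace ℝ (Fin n)) :=
  LinearMap.toContinuousLinearMap
    { toFun := fun M => Matrix.toEuclideanCLM (𝕜 := ℝ) M
      map_add' := fun M N => map_add _ M N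
      map_smul' := fun c M => _root_.map_smul (Matrix.toEuclideanCLM (𝕜 := ℝ)) c M }

lemma matCLM_apply {n : ℕ} (M : Matrix (Fin n) (Fin n) ℝ) :
    matCLM n M = Matrix.toEuclideanCLM (𝕜 := ℝ) M := rfl

lemma norm_matCLM {n : ℕ} (M : Matrix (Fin n) (Fin n) ℝ) : ‖matCLM n M‖ = sNorm M := rfl

lemma exp_sub_one_le (y : ℝ) (hy : 0 ≤ y) : Real.exp y - 1 ≤ y * Real.exp y := by
  have h1 := Real.add_one_le_exp (-y)
  have h2 : Real.exp (-y) * Real.exp y = 1 := by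
    rw [← Real.exp_add]; simp
  nlinarith [Real.exp_pos y]

lemma gronwallBound_le_of_mem {δ K c T x : ℝ} (hδ : 0 ≤ δ) (hK : 0 ≤ K) (hc : 0 ≤ c)
    (hx0 : 0 ≤ x) (hxT : x ≤ T) :
    gronwallBound δ K c x ≤ (δ + T * c) * Real.exp (K * T) := by
  have hT : 0 ≤ T := le_trans hx0 hxT
  have hexp : Real.exp (K * x) ≤ Real.exp (K * T) :=
    Real.exp_le_exp.2 (mul_le_mul_of_nonneg_left hxT hK)
  have h1 : (1:ℝ) ≤ Real.exp (K * T) := Real.one_le_exp (mul_nonneg hK hT)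
  rcases eq_or_lt_of_le hK with hK0 | hKpos
  · rw [← hK0, gronwallBound_K0]
    show δ + c * x ≤ (δ + T * c) * Real.exp (0 * T)
    rw [zero_mul, Real.exp_zero, mul_one]
    nlinarith
  · rw [gronwallBound_of_K_ne_0 (ne_of_gt hKpos)]
    have he := exp_sub_one_le (K * x) (mul_nonneg hK hx0)
    have hdiv : c / K * (Real.exp (K * x) - 1) ≤ c * (x * Real.exp (K * x)) := by
      rw [div_mul_eq_mul_div, div_le_iff₀ hKpos]
      calc c * (Real.exp (K * x) - 1) ≤ c * (K * x * Real.exp (K * x)) := by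
            exact mul_le_mul_of_nonneg_left he hc
        _ = c * (x * Real.exp (K * x)) * K := by ring
    have hxe : x * Real.exp (K * x) ≤ T * Real.exp (K * T) := by
      have := Real.exp_pos (K * x)
      nlinarith
    nlinarith [Real.exp_pos (K * x), mul_le_mul_of_nonneg_left hexp hδ,
      mul_le_mul_of_nonneg_left hxe hc]

lemma lyap_bounds {n p : ℕ} (T ζ : ℝ) (hT : 0 < T)
    (A : Matrix (Fin n) (Fin n) ℝ) (C : Matrix (Fin p) (Fin n) ℝ)
    (X : Matrix (Fin n) (Fin n) ℝ)
    (P : ℝ → Matrix (Fin n) (Fin n) ℝ)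
    (hP : ∀ t ∈ Set.Icc (0:ℝ) T,
        HasDerivAt P (-(Aᵀ * P t + P t * A + Cᵀ * C + (2 * ζ) • P t)) t)
    (hPT : P T = X) :
    ∀ τ₀ τ₁ : ℝ, 0 ≤ τ₀ → τ₀ ≤ τ₁ → τ₁ ≤ T →
      sNorm (P τ₁ - P τ₀) ≤ (τ₁ - τ₀) *
        (2 * sNorm (A + ζ • (1 : Matrix (Fin n) (Fin n) ℝ)) *
          ((sNorm X + T * sNorm (Cᵀ * C)) *
            Real.exp (2 * T * sNorm (A + ζ • (1 : Matrix (Fin n) (Fin n) ℝ))))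
          + sNorm (Cᵀ * C)) := by
  set Az := A + ζ • (1 : Matrix (Fin n) (Fin n) ℝ) with hAz
  set a := sNorm Az with ha
  set c := sNorm (Cᵀ * C) with hc
  set PP := (sNorm X + T * c) * Real.exp (2 * T * a) with hPP
  have ha0 : 0 ≤ a := sNorm_nonneg _
  have hc0 : 0 ≤ c := sNorm_nonneg _
  have matid : ∀ M : Matrix (Fin n) (Fin n) ℝ,
      Azᵀ * M + M * Az + Cᵀ * C = Aᵀ * M + M * A + Cᵀ * C + (2 * ζ) • M := by
    intro M
    rw [hAz]
    rw [Matrix.transpose_add, Matrix.transpose_smul, Matrix.transpose_one]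
    rw [Matrix.add_mul, Matrix.mul_add, Matrix.smul_mul, Matrix.mul_smul,
      Matrix.one_mul, Matrix.mul_one]
    have h2 : (2 * ζ) • M = ζ • M + ζ • M := by
      rw [← add_smul, two_mul]
    rw [h2]
    abel
  have vfbound : ∀ M : Matrix (Fin n) (Fin n) ℝ,
      sNorm (Azᵀ * M + M * Az + Cᵀ * C) ≤ 2 * a * sNorm M + c := by
    intro M
    calc sNorm (Azᵀ * M + M * Az + Cᵀ * C)
        ≤ sNorm (Azᵀ * M + M * Az) + c := sNorm_add_le _ _
      _ ≤ sNorm (Azᵀ * M) + sNorm (M * Az) + c := by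
          have := sNorm_add_le (Azᵀ * M) (M * Az); linarith
      _ ≤ sNorm Azᵀ * sNorm M + sNorm M * sNorm Az + c := by
          have h1 := sNorm_mul_le Azᵀ M
          have h2 := sNorm_mul_le M Az
          linarith
      _ = 2 * a * sNorm M + c := by rw [sNorm_transpose_s4, ← ha]; ring
  have hP' : ∀ t ∈ Set.Icc (0:ℝ) T,
      HasDerivAt P (-(Azᵀ * P t + P t * Az + Cᵀ * C)) t := by
    intro t ht
    rw [matid]
    exact hP t ht
  set F : ℝ → (EuclideanSpace ℝ (Fin n) →L[ℝ] EuclideanSpace ℝ (Fin n)) :=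
    fun s => matCLM n (P (T - s)) with hF
  have hFd : ∀ s ∈ Set.Icc (0:ℝ) T,
      HasDerivAt F (matCLM n (Azᵀ * P (T - s) + P (T - s) * Az + Cᵀ * C)) s := by
    intro s hs
    have hmem : T - s ∈ Set.Icc (0:ℝ) T := by
      constructor <;> [linarith [hs.2]; linarith [hs.1]]
    have h1 : HasDerivAt (fun s : ℝ => T - s) (-1) s := by
      simpa using (hasDerivAt_id s).const_sub T
    have h2 : HasDerivAt (fun s : ℝ => P (T - s))
        ((-1 : ℝ) • (-(Azᵀ * P (T - s) + P (T - s) * Az + Cᵀ * C))) s :=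
      (hP' (T - s) hmem).scomp s h1
    rw [neg_one_smul, neg_neg] at h2
    exact ((matCLM n).hasFDerivAt.comp_hasDerivAt s h2)
  have hFc : ContinuousOn F (Set.Icc 0 T) :=
    fun s hs => ((hFd s hs).continuousAt).continuousWithinAt
  have hF0 : ‖F 0‖ ≤ sNorm X := by
    rw [hF]; simp only [sub_zero, hPT]; exact le_of_eq (norm_matCLM X)
  have gron := norm_le_gronwallBound_of_norm_deriv_right_le (δ := sNorm X) (K := 2 * a)
    (ε := c) hFc
    (fun s hs => (hFd s (Set.mem_Icc_of_Ico hs)).hasDerivWithinAt) hF0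
    (fun s hs => by
      rw [norm_matCLM]
      have := vfbound (P (T - s))
      rw [norm_matCLM]
      linarith)
  have hPbound : ∀ t ∈ Set.Icc (0:ℝ) T, sNorm (P t) ≤ PP := by
    intro t ht
    have hmem : T - t ∈ Set.Icc (0:ℝ) T := by
      constructor <;> [linarith [ht.2]; linarith [ht.1]]
    have h1 := gron (T - t) hmem
    have h2 : F (T - t) = matCLM n (P t) := by rw [hF]; ring_nf
    rw [h2, norm_matCLM] at h1
    calc sNorm (P t) ≤ gronwallBound (sNorm X) (2 * a) c (T - t - 0) := h1
      _ ≤ (sNorm X + T * c) * Real.exp ((2 * a) * T) :=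
          gronwallBound_le_of_mem (sNorm_nonneg X) (by linarith) hc0
            (by simp; linarith [ht.2]) (by simp; linarith [ht.1])
      _ = PP := by rw [hPP]; ring_nf
  intro τ₀ τ₁ h0 h01 h1T
  have hsub : Set.Icc τ₀ τ₁ ⊆ Set.Icc (0:ℝ) T := Set.Icc_subset_Icc h0 h1T
  set G : ℝ → (EuclideanSpace ℝ (Fin n) →L[ℝ] EuclideanSpace ℝ (Fin n)) :=
    fun t => matCLM n (P t) with hG
  have hGd : ∀ t ∈ Set.Icc τ₀ τ₁, HasDerivWithinAt G
      (matCLM n (-(Azᵀ * P t + P t * Az + Cᵀ * C))) (Set.Icc τ₀ τ₁) t := by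
    intro t ht
    exact ((matCLM n).hasFDerivAt.comp_hasDerivAt t (hP' t (hsub ht))).hasDerivWithinAt
  have hbd : ∀ t ∈ Set.Ico τ₀ τ₁,
      ‖matCLM n (-(Azᵀ * P t + P t * Az + Cᵀ * C))‖ ≤ 2 * a * PP + c := by
    intro t ht
    rw [norm_matCLM, sNorm_neg]
    have h1 := vfbound (P t)
    have h2 := hPbound t (hsub (Set.mem_Icc_of_Ico ht))
    nlinarith
  have := norm_image_sub_le_of_norm_deriv_le_segment' hGd hbd τ₁ (Set.right_mem_Icc.2 h01)
  rw [hG] at this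
  have heq : matCLM n (P τ₁) - matCLM n (P τ₀) = matCLM n (P τ₁ - P τ₀) := (map_sub _ _ _).symm
  rw [heq, norm_matCLM] at this
  calc sNorm (P τ₁ - P τ₀) ≤ (2 * a * PP + c) * (τ₁ - τ₀) := this
    _ = (τ₁ - τ₀) * (2 * a * PP + c) := by ring

end Aux

/-- Corollary 1 of the paper: uniform continuity bound for Ψ along solutions of the
backward Lyapunov ODE. -/
theorem stmt4 {n p m : ℕ} (hn : 1 ≤ n) (hp : 1 ≤ p) (hm : 1 ≤ m)
    (T ζ : ℝ) (hT : 0 < T) (hζ : 0 < ζ)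
    (A : Matrix (Fin n) (Fin n) ℝ) (C : Matrix (Fin p) (Fin n) ℝ)
    (X : Matrix (Fin n) (Fin n) ℝ) (hX : X.PosDef)
    (D : Matrix (Fin m) (Fin n) ℝ) (L : Matrix (Fin n) (Fin m) ℝ)
    (α h γ κ : ℝ) (hα0 : 0 ≤ α) (hαζ : α < ζ) (hh : 0 < h) (hγ : 0 < γ) (hκ : 0 < κ)
    (Q W : Matrix (Fin n) (Fin n) ℝ) (hQ : Q.PosDef) (hW : W.PosDef)
    (P : ℝ → Matrix (Fin n) (Fin n) ℝ)
    (hP : ∀ t ∈ Set.Icc (0:ℝ) T,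
        HasDerivAt P (-(Aᵀ * P t + P t * A + Cᵀ * C + (2 * ζ) • P t)) t)
    (hPT : P T = X)
    (hPsym : ∀ t ∈ Set.Icc (0:ℝ) T, (P t).IsSymm)
    (ε μ : ℝ) (hε : 0 < ε) (hμ : 0 < μ)
    (hϑ : vartheta T ζ A C X μ < ε / (2 * (ζ - α + sNorm (L * D)))) :
    ∀ τ₀ τ₁ : ℝ, 0 ≤ τ₀ → τ₀ ≤ τ₁ → τ₁ ≤ T → τ₁ - τ₀ < μ →
      sNorm (Psi A D L Q W ζ α h γ κ (P τ₁) - Psi A D L Q W ζ α h γ κ (P τ₀)) < ε := by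
  intro τ₀ τ₁ h0 h01 h1T hlt
  set Az := A + ζ • (1 : Matrix (Fin n) (Fin n) ℝ) with hAzdef
  set a := sNorm Az with hadef
  set c := sNorm (Cᵀ * C) with hcdef
  set PP := (sNorm X + T * c) * Real.exp (2 * T * a) with hPPdef
  have ha0 : 0 ≤ a := sNorm_nonneg _
  have hc0 : 0 ≤ c := sNorm_nonneg _
  have hPP0 : 0 ≤ PP := by
    apply mul_nonneg
    · have := sNorm_nonneg X; nlinarith [hT.le]
    · exact (Real.exp_pos _).le
  set E := P τ₁ - P τ₀ with hEdef
  have hEbound := lyap_bounds T ζ hT A C X P hP hPT τ₀ τ₁ h0 h01 h1T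
  -- `sNorm E ≤ vartheta`
  have hEv : sNorm E ≤ vartheta T ζ A C X μ := by
    have hsq : Real.exp (2 * a * μ) = Real.exp (a * μ) ^ 2 := by
      rw [pow_two, ← Real.exp_add]; ring_nf
    have hrw : 2 * (Real.exp (a * μ) - 1) + (Real.exp (a * μ) - 1) ^ 2
        = Real.exp (2 * a * μ) - 1 := by rw [hsq]; ring
    have hone : (1:ℝ) ≤ Real.exp (2 * a * μ) :=
      Real.one_le_exp (by positivity)
    have hexpge : 2 * a * μ + 1 ≤ Real.exp (2 * a * μ) := Real.add_one_le_exp _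
    have step0 : 0 ≤ 2 * a * PP + c := by positivity
    have step1 : sNorm E ≤ μ * (2 * a * PP + c) :=
      hEbound.trans (mul_le_mul_of_nonneg_right (by linarith) step0)
    have step2 : 2 * a * μ * PP ≤ (Real.exp (2 * a * μ) - 1) * PP :=
      mul_le_mul_of_nonneg_right (by linarith) hPP0
    have step3 : μ * c ≤ μ * Real.exp (2 * a * μ) * c := by
      nlinarith [mul_nonneg (mul_nonneg hμ.le hc0) (sub_nonneg.2 hone)]
    show sNorm E ≤ μ * Real.exp (2 * a * μ) * c +
      (2 * (Real.exp (a * μ) - 1) + (Real.exp (a * μ) - 1) ^ 2) * PP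
    rw [hrw]
    nlinarith
  -- decompose the difference of `Psi`
  have hdecomp := Psi_sub_decomp A D L Q W ζ α h γ κ (P τ₁) (P τ₀)
  rw [hdecomp]
  have h01' : (0 : Fin 4) ≠ 1 := by decide
  have h02' : (0 : Fin 4) ≠ 2 := by decide
  have hb1 := sNorm_single (n := n) 0 0 ((-(2 * (ζ - α))) • E)
  have hb2 := sNorm_pair (n := n) 0 1 h01' (E * L * D) ((E * L * D)ᵀ)
    (le_of_eq (sNorm_transpose_s4 _))
  have hb3 := sNorm_pair (n := n) 0 2 h02' (-(E * L * D)) ((-(E * L * D))ᵀ)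
    (le_of_eq (sNorm_transpose_s4 _))
  have hsm : sNorm ((-(2 * (ζ - α))) • E) = 2 * (ζ - α) * sNorm E := by
    rw [sNorm_smul]
    congr 1
    rw [abs_of_nonpos (by linarith)]
    ring
  have hmul : sNorm (E * L * D) ≤ sNorm E * sNorm (L * D) := by
    rw [Matrix.mul_assoc]
    exact sNorm_mul_le E (L * D)
  have hneg : sNorm (-(E * L * D)) = sNorm (E * L * D) := sNorm_neg _
  set Z1 := (Matrix.of fun qi rj : Fin 4 × Fin n =>
        if qi.1 = 0 ∧ rj.1 = 0 then ((-(2 * (ζ - α))) • E) qi.2 rj.2 else 0) with hZ1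
  set Z2 := (Matrix.of fun qi rj : Fin 4 × Fin n =>
        if qi.1 = 0 ∧ rj.1 = 1 then (E * L * D) qi.2 rj.2
        else if qi.1 = 1 ∧ rj.1 = 0 then (E * L * D)ᵀ qi.2 rj.2 else 0) with hZ2
  set Z3 := (Matrix.of fun qi rj : Fin 4 × Fin n =>
        if qi.1 = 0 ∧ rj.1 = 2 then (-(E * L * D)) qi.2 rj.2
        else if qi.1 = 2 ∧ rj.1 = 0 then (-(E * L * D))ᵀ qi.2 rj.2 else 0) with hZ3
  have htri : sNorm (Z1 + Z2 + Z3) ≤ sNorm Z1 + sNorm Z2 + sNorm Z3 := by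
    calc sNorm (Z1 + Z2 + Z3) ≤ sNorm (Z1 + Z2) + sNorm Z3 := sNorm_add_le _ _
      _ ≤ sNorm Z1 + sNorm Z2 + sNorm Z3 := by
          have := sNorm_add_le Z1 Z2; linarith
  have hE0 : 0 ≤ sNorm E := sNorm_nonneg _
  have hLD0 : 0 ≤ sNorm (L * D) := sNorm_nonneg _
  have hd : (0:ℝ) < 2 * (ζ - α + sNorm (L * D)) := by nlinarith
  have hfin : sNorm (Z1 + Z2 + Z3) ≤ 2 * (ζ - α + sNorm (L * D)) * sNorm E := by
    have := hb1
    rw [hsm] at this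
    have h2 : sNorm Z2 ≤ sNorm E * sNorm (L * D) := hb2.trans hmul
    have h3 : sNorm Z3 ≤ sNorm E * sNorm (L * D) := by
      rw [hneg] at hb3; exact hb3.trans hmul
    nlinarith
  have hlast : 2 * (ζ - α + sNorm (L * D)) * sNorm E < ε := by
    have hv := hϑ
    have h1 : 2 * (ζ - α + sNorm (L * D)) * sNorm E
        ≤ 2 * (ζ - α + sNorm (L * D)) * vartheta T ζ A C X μ :=
      mul_le_mul_of_nonneg_left hEv hd.le
    have h2 : vartheta T ζ A C X μ * (2 * (ζ - α + sNorm (L * D))) < ε :=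
      (lt_div_iff₀ hd).1 hv
    nlinarith
  exact lt_of_le_of_lt hfin hlast
end
end

section
/- If V'(t) + 2α·V(t) + g(t) ≤ 0 for every t ∈ (0,∞) \ 𝔇, then for all t ≥ 0: e^{2αt}·V(t) + ∫₀ᵗ e^{2αs}·g(s) ds ≤ V(0). -/
noncomputable section

/-- The comparison/integration argument (eq. (23) in the proof of Theorem 1):
a nonnegative function with downward jumps on a locally finite set 𝔇, satisfying
V' + 2αV + g ≤ 0 off 𝔇, obeys the integrated dissipation inequality. -/
theorem stmt12 (α : ℝ) (hα : 0 < α) (D : Set ℝ) (hDsub : D ⊆ Set.Ioi 0)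
    (hDfin : ∀ K : Set ℝ, Bornology.IsBounded K → (D ∩ K).Finite)
    (g V : ℝ → ℝ)
    (hg : ContinuousOn g (Set.Ici 0)) (hg0 : ∀ t ∈ Set.Ici (0:ℝ), 0 ≤ g t)
    (hV0 : ∀ t ∈ Set.Ici (0:ℝ), 0 ≤ V t)
    (hVrc : ∀ t ∈ Set.Ici (0:ℝ), ContinuousWithinAt V (Set.Ici t) t)
    (hVdiff : ∀ t ∈ Set.Ioi (0:ℝ) \ D, DifferentiableAt ℝ V t)
    (hjump : ∀ d ∈ D, ∃ l : ℝ,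
      Filter.Tendsto V (nhdsWithin d (Set.Iio d)) (nhds l) ∧ V d ≤ l)
    (hineq : ∀ t ∈ Set.Ioi (0:ℝ) \ D, deriv V t + 2 * α * V t + g t ≤ 0) :
    ∀ t ≥ (0:ℝ),
      Real.exp (2 * α * t) * V t + (∫ s in (0:ℝ)..t, Real.exp (2 * α * s) * g s)
        ≤ V 0 := by
  set E : ℝ → ℝ := fun s => Real.exp (2 * α * s) with hE
  set f : ℝ → ℝ := fun s => E s * g s with hf
  set F : ℝ → ℝ := fun x => ∫ s in (0:ℝ)..x, f s with hF
  set W : ℝ → ℝ := fun x => E x * V x + F x with hW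
  have hEc : Continuous E := Real.continuous_exp.comp (continuous_const.mul continuous_id)
  have hfc : ContinuousOn f (Set.Ici 0) := hEc.continuousOn.mul hg
  have hfint : ∀ x : ℝ, 0 ≤ x → IntervalIntegrable f MeasureTheory.volume 0 x := by
    intro x hx
    refine (hfc.mono ?_).intervalIntegrable
    rw [Set.uIcc_of_le hx]
    exact fun y hy => hy.1
  have hfca : ∀ x : ℝ, 0 < x → ContinuousAt f x := fun x hx =>
    hfc.continuousAt (Filter.mem_of_superset (isOpen_Ioi.mem_nhds hx) Set.Ioi_subset_Ici_self)
  have hFd : ∀ x : ℝ, 0 < x → HasDerivAt F (f x) x := fun x hx =>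
    intervalIntegral.integral_hasDerivAt_right (hfint x hx.le)
      (ContinuousOn.stronglyMeasurableAtFilter isOpen_Ioi
        (hfc.mono Set.Ioi_subset_Ici_self) x hx)
      (hfca x hx)
  have hEd : ∀ x : ℝ, HasDerivAt E (E x * (2 * α)) x := by
    intro x
    have h1 : HasDerivAt (fun s : ℝ => 2 * α * s) (2 * α) x := by
      simpa using (hasDerivAt_id x).const_mul (2 * α)
    exact h1.exp
  have hWd : ∀ x, x ∈ Set.Ioi (0:ℝ) \ D →
      HasDerivAt W (E x * (deriv V x + 2 * α * V x + g x)) x := by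
    intro x hx
    have h1 := ((hEd x).mul ((hVdiff x hx).hasDerivAt)).add (hFd x hx.1)
    have h2 : HasDerivAt W (E x * (2 * α) * V x + E x * deriv V x + f x) x := h1
    convert h2 using 1
    simp only [hf]
    ring
  have hWderiv : ∀ x, x ∈ Set.Ioi (0:ℝ) \ D → deriv W x ≤ 0 := by
    intro x hx
    rw [(hWd x hx).deriv]
    exact mul_nonpos_iff.mpr (Or.inl ⟨(Real.exp_pos _).le, hineq x hx⟩)
  have hFc : ∀ M : ℝ, 0 ≤ M → ContinuousOn F (Set.Icc 0 M) := by
    intro M hM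
    have hint : MeasureTheory.IntegrableOn f (Set.uIcc 0 M) MeasureTheory.volume := by
      rw [Set.uIcc_of_le hM]
      exact (hfc.mono (fun y hy => hy.1)).integrableOn_Icc
    have := intervalIntegral.continuousOn_primitive_interval hint
    rwa [Set.uIcc_of_le hM] at this
  -- jump-free antitone step
  have key0 : ∀ a b : ℝ, 0 ≤ a → a ≤ b → D ∩ Set.Ioc a b = ∅ → W b ≤ W a := by
    intro a b ha hab hempty
    rcases eq_or_lt_of_le hab with rfl | hab
    · exact le_refl _
    have hnotD : ∀ x ∈ Set.Ioc a b, x ∉ D := by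
      intro x hx hxD
      exact absurd (Set.mem_inter hxD hx) (by rw [hempty]; exact Set.notMem_empty x)
    have hb0 : (0:ℝ) ≤ b := le_trans ha hab.le
    have hWc : ContinuousOn W (Set.Icc a b) := by
      intro x hx
      have hFcx : ContinuousWithinAt F (Set.Icc a b) x :=
        ((hFc b hb0).mono (Set.Icc_subset_Icc_left ha)) x hx
      have hEcx : ContinuousWithinAt E (Set.Icc a b) x := hEc.continuousWithinAt
      rcases eq_or_lt_of_le hx.1 with heq | hax
      · have hVc : ContinuousWithinAt V (Set.Icc a b) x :=
          (hVrc x (by rw [← heq]; exact ha)).mono (fun y hy => by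
            rw [Set.mem_Ici, ← heq]; exact hy.1)
        exact (hEcx.mul hVc).add hFcx
      · have hxD : x ∉ D := hnotD x ⟨hax, hx.2⟩
        have hVc : ContinuousWithinAt V (Set.Icc a b) x :=
          ((hVdiff x ⟨lt_of_le_of_lt ha hax, hxD⟩).continuousAt).continuousWithinAt
        exact (hEcx.mul hVc).add hFcx
    have hmem : ∀ x ∈ interior (Set.Icc a b), x ∈ Set.Ioi (0:ℝ) \ D := by
      intro x hx
      rw [interior_Icc] at hx
      exact ⟨lt_of_le_of_lt ha hx.1, hnotD x ⟨hx.1, hx.2.le⟩⟩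
    have hanti : AntitoneOn W (Set.Icc a b) := by
      refine antitoneOn_of_deriv_nonpos (convex_Icc a b) hWc ?_ ?_
      · intro x hx
        exact ((hWd x (hmem x hx)).differentiableAt).differentiableWithinAt
      · intro x hx
        exact hWderiv x (hmem x hx)
    exact hanti ⟨le_refl a, hab.le⟩ ⟨hab.le, le_refl b⟩ hab.le
  -- jump behavior of W
  have keyjump : ∀ d ∈ D, ∃ l : ℝ,
      Filter.Tendsto W (nhdsWithin d (Set.Iio d)) (nhds l) ∧ W d ≤ l := by
    intro d hd
    obtain ⟨l, hl, hVl⟩ := hjump d hd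
    have hd0 : 0 < d := hDsub hd
    have hFca : ContinuousAt F d := (hFd d hd0).continuousAt
    refine ⟨E d * l + F d, ?_, ?_⟩
    · exact ((hEc.continuousAt.tendsto.mono_left nhdsWithin_le_nhds).mul hl).add
        (hFca.tendsto.mono_left nhdsWithin_le_nhds)
    · have h1 : E d * V d ≤ E d * l :=
        mul_le_mul_of_nonneg_left hVl (Real.exp_pos _).le
      simp only [hW]
      linarith
  -- main induction
  have main : ∀ n : ℕ, ∀ a b : ℝ, 0 ≤ a → a ≤ b → (D ∩ Set.Ioc a b).ncard ≤ n →
      W b ≤ W a := by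
    intro n
    induction n with
    | zero =>
      intro a b ha hab hcard
      have hfin : (D ∩ Set.Ioc a b).Finite := hDfin _ (Metric.isBounded_Ioc a b)
      exact key0 a b ha hab ((Set.ncard_eq_zero hfin).mp (Nat.le_zero.mp hcard))
    | succ n ih =>
      intro a b ha hab hcard
      have hfin : (D ∩ Set.Ioc a b).Finite := hDfin _ (Metric.isBounded_Ioc a b)
      rcases Set.eq_empty_or_nonempty (D ∩ Set.Ioc a b) with he | hne
      · exact key0 a b ha hab he
      · have hne' : hfin.toFinset.Nonempty := by
          rwa [Set.Finite.toFinset_nonempty]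
        set d : ℝ := hfin.toFinset.max' hne' with hdd
        have hdmem : d ∈ D ∩ Set.Ioc a b := by
          have := hfin.toFinset.max'_mem hne'
          rwa [Set.Finite.mem_toFinset] at this
        have hdmax : ∀ x ∈ D ∩ Set.Ioc a b, x ≤ d := by
          intro x hx
          exact hfin.toFinset.le_max' x ((Set.Finite.mem_toFinset hfin).mpr hx)
        have hd : d ∈ D := hdmem.1
        have hdIoc : d ∈ Set.Ioc a b := hdmem.2
        have hd0 : 0 < d := hDsub hd
        have hempty : D ∩ Set.Ioc d b = ∅ := by
          ext x
          simp only [Set.mem_inter_iff, Set.mem_Ioc, Set.mem_empty_iff_false, iff_false,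
            not_and, and_imp]
          intro hxD hx1 hx2
          exact absurd (hdmax x ⟨hxD, lt_trans hdIoc.1 hx1, hx2⟩) (not_le.mpr hx1)
        have h1 : W b ≤ W d := key0 d b hd0.le hdIoc.2 hempty
        obtain ⟨l, hl, hWl⟩ := keyjump d hd
        have h2 : ∀ x ∈ Set.Ico a d, W x ≤ W a := by
          intro x hx
          refine ih a x ha hx.1 ?_
          have hsub : D ∩ Set.Ioc a x ⊆ (D ∩ Set.Ioc a b) \ {d} := by
            intro y hy
            refine ⟨⟨hy.1, hy.2.1, le_trans hy.2.2 (le_trans hx.2.le hdIoc.2)⟩, ?_⟩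
            intro hyd
            rw [Set.mem_singleton_iff] at hyd
            exact absurd (lt_of_le_of_lt hy.2.2 hx.2) (by rw [hyd]; exact lt_irrefl d)
          calc (D ∩ Set.Ioc a x).ncard ≤ ((D ∩ Set.Ioc a b) \ {d}).ncard :=
                Set.ncard_le_ncard hsub hfin.diff
            _ = (D ∩ Set.Ioc a b).ncard - 1 :=
                Set.ncard_diff_singleton_of_mem hdmem
            _ ≤ (n + 1) - 1 := Nat.sub_le_sub_right hcard 1
            _ = n := rfl
        have h3 : l ≤ W a := by
          have hev : ∀ᶠ x in nhdsWithin d (Set.Iio d), W x ≤ W a :=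
            Filter.eventually_of_mem (Ico_mem_nhdsLT_of_mem ⟨hdIoc.1, le_refl d⟩)
              (fun x hx => h2 x hx)
          exact le_of_tendsto hl hev
        linarith
  intro t ht
  have h := main (D ∩ Set.Ioc 0 t).ncard 0 t le_rfl ht le_rfl
  have hW0 : W 0 = V 0 := by
    simp [hW, hF, hE, intervalIntegral.integral_same]
  have : W t ≤ V 0 := hW0 ▸ h
  simpa [hW, hF, hE, hf] using this
end
end

section
/- If V'(t) + 2α·V(t) ≤ c for every t ∈ (0,∞) \ 𝔇, then for all t ≥ 0: V(t) ≤ e^{−2αt}·V(0) + (c/(2α))·(1 − e^{−2αt}); in particular V(t) ≤ e^{−2αt}·V(0) + c/(2α). -/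
noncomputable section

/-- The ultimate-boundedness comparison argument (eq. (24) in the paper):
a nonnegative function with downward jumps on a locally finite set 𝔇, satisfying
V' + 2αV ≤ c off 𝔇, decays exponentially up to the offset c/(2α). -/
theorem stmt13 (α c : ℝ) (hα : 0 < α) (hc : 0 ≤ c) (D : Set ℝ) (hDsub : D ⊆ Set.Ioi 0)
    (hDfin : ∀ K : Set ℝ, Bornology.IsBounded K → (D ∩ K).Finite)
    (V : ℝ → ℝ)
    (hV0 : ∀ t ∈ Set.Ici (0:ℝ), 0 ≤ V t)
    (hVrc : ∀ t ∈ Set.Ici (0:ℝ), ContinuousWithinAt V (Set.Ici t) t)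
    (hVdiff : ∀ t ∈ Set.Ioi (0:ℝ) \ D, DifferentiableAt ℝ V t)
    (hjump : ∀ d ∈ D, ∃ l : ℝ,
      Filter.Tendsto V (nhdsWithin d (Set.Iio d)) (nhds l) ∧ V d ≤ l)
    (hineq : ∀ t ∈ Set.Ioi (0:ℝ) \ D, deriv V t + 2 * α * V t ≤ c) :
    ∀ t ≥ (0:ℝ),
      V t ≤ Real.exp (-(2 * α * t)) * V 0 +
          (c / (2 * α)) * (1 - Real.exp (-(2 * α * t)))
      ∧ V t ≤ Real.exp (-(2 * α * t)) * V 0 + c / (2 * α) := by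
  have h2α : (2 * α) ≠ 0 := by positivity
  set W : ℝ → ℝ := fun t => Real.exp (2 * α * t) * V t
      - c / (2 * α) * (Real.exp (2 * α * t) - 1) with hW
  -- derivative of W off D
  have hWderiv : ∀ t ∈ Set.Ioi (0:ℝ) \ D,
      HasDerivAt W (Real.exp (2 * α * t) * (deriv V t + 2 * α * V t - c)) t := by
    intro t ht
    have hE : HasDerivAt (fun t => Real.exp (2 * α * t)) (2 * α * Real.exp (2 * α * t)) t := by
      have h1 : HasDerivAt (fun t : ℝ => 2 * α * t) (2 * α) t := by
        simpa using (hasDerivAt_id t).const_mul (2 * α)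
      simpa [mul_comm] using h1.exp
    have hV : HasDerivAt V (deriv V t) t := (hVdiff t ht).hasDerivAt
    have := (hE.mul hV).sub ((hE.sub_const 1).const_mul (c / (2 * α)))
    convert this using 1
    · rfl
    · rfl
    · rfl
    have hc2 : c / (2 * α) * (2 * α) = c := div_mul_cancel₀ c h2α
    linear_combination (Real.exp (2 * α * t)) * hc2
  have hWderivle : ∀ t ∈ Set.Ioi (0:ℝ) \ D, deriv W t ≤ 0 := by
    intro t ht
    rw [(hWderiv t ht).deriv]
    have h1 := hineq t ht
    have h2 : (0:ℝ) < Real.exp (2 * α * t) := Real.exp_pos _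
    nlinarith
  have hWrc : ∀ t ∈ Set.Ici (0:ℝ), ContinuousWithinAt W (Set.Ici t) t := by
    intro t ht
    exact ((Real.continuous_exp.comp (continuous_const.mul continuous_id)).continuousWithinAt.mul
      (hVrc t ht)).sub
      (continuousWithinAt_const.mul
        ((Real.continuous_exp.comp (continuous_const.mul continuous_id)).continuousWithinAt.sub
          continuousWithinAt_const))
  have hWcont : ∀ t ∈ Set.Ioi (0:ℝ) \ D, ContinuousAt W t := by
    intro t ht
    exact ((Real.continuous_exp.comp (continuous_const.mul continuous_id)).continuousAt.mul
      (hVdiff t ht).continuousAt).sub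
      (continuousAt_const.mul
        ((Real.continuous_exp.comp (continuous_const.mul continuous_id)).continuousAt.sub
          continuousAt_const))
  -- base case: no jump points in (a, b]
  have base : ∀ a b : ℝ, 0 ≤ a → a ≤ b → D ∩ Set.Ioc a b = ∅ → W b ≤ W a := by
    intro a b ha hab hempty
    rcases eq_or_lt_of_le hab with rfl | hab
    · exact le_refl _
    · have hnoD : ∀ x, a < x → x ≤ b → x ∉ D := by
        intro x h1 h2 hx
        have : x ∈ D ∩ Set.Ioc a b := ⟨hx, h1, h2⟩
        simp [hempty] at this
      have hcont : ContinuousOn W (Set.Icc a b) := by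
        intro x hx
        rcases eq_or_lt_of_le hx.1 with heq | hax
        · subst heq
          exact (hWrc a ha).mono (Set.Icc_subset_Ici_self)
        · exact (hWcont x ⟨lt_of_le_of_lt ha hax, hnoD x hax hx.2⟩).continuousWithinAt
      have hdiff : DifferentiableOn ℝ W (interior (Set.Icc a b)) := by
        rw [interior_Icc]
        intro x hx
        exact ((hWderiv x ⟨lt_of_le_of_lt ha hx.1,
          hnoD x hx.1 hx.2.le⟩).differentiableAt).differentiableWithinAt
      have hanti : AntitoneOn W (Set.Icc a b) := by
        apply antitoneOn_of_deriv_nonpos (convex_Icc a b) hcont hdiff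
        rw [interior_Icc]
        intro x hx
        exact hWderivle x ⟨lt_of_le_of_lt ha hx.1, hnoD x hx.1 hx.2.le⟩
      exact hanti (Set.left_mem_Icc.2 hab.le) (Set.right_mem_Icc.2 hab.le) hab.le
  -- main induction on the number of jump points
  have key : ∀ n : ℕ, ∀ a b : ℝ, 0 ≤ a → a ≤ b →
      ∀ hf : (D ∩ Set.Ioc a b).Finite, hf.toFinset.card ≤ n → W b ≤ W a := by
    intro n
    induction n with
    | zero =>
      intro a b ha hab hf hcard
      apply base a b ha hab
      have : hf.toFinset = ∅ := Finset.card_eq_zero.mp (Nat.le_zero.mp hcard)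
      simpa [Set.Finite.toFinset_eq_empty] using this
    | succ n ih =>
      intro a b ha hab hf hcard
      by_cases hemp : D ∩ Set.Ioc a b = ∅
      · exact base a b ha hab hemp
      · -- let d be the largest jump point in (a, b]
        have hne : hf.toFinset.Nonempty := by
          rw [Set.Finite.toFinset_nonempty]
          exact Set.nonempty_iff_ne_empty.mpr hemp
        set d := hf.toFinset.max' hne with hd
        have hdmem : d ∈ D ∩ Set.Ioc a b := hf.mem_toFinset.mp (hf.toFinset.max'_mem hne)
        have hdD : d ∈ D := hdmem.1
        have had : a < d := hdmem.2.1
        have hdb : d ≤ b := hdmem.2.2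
        have hdmax : ∀ x ∈ D ∩ Set.Ioc a b, x ≤ d := fun x hx =>
          hf.toFinset.le_max' x (hf.mem_toFinset.mpr hx)
        -- Step 1: W b ≤ W d
        have step1 : W b ≤ W d := by
          apply base d b (ha.trans had.le) hdb
          ext x
          simp only [Set.mem_inter_iff, Set.mem_Ioc, Set.mem_empty_iff_false, iff_false]
          rintro ⟨hxD, hx1, hx2⟩
          exact absurd (hdmax x ⟨hxD, had.trans hx1, hx2⟩) (not_le.mpr hx1)
        -- the left limit of W at d
        obtain ⟨l, hl, hVdl⟩ := hjump d hdD
        have hd0 : 0 < d := ha.trans_lt had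
        set L : ℝ := Real.exp (2 * α * d) * l - c / (2 * α) * (Real.exp (2 * α * d) - 1) with hL
        have hWtendsto : Filter.Tendsto W (nhdsWithin d (Set.Iio d)) (nhds L) := by
          have hEt : Filter.Tendsto (fun t => Real.exp (2 * α * t)) (nhdsWithin d (Set.Iio d))
              (nhds (Real.exp (2 * α * d))) :=
            ((Real.continuous_exp.comp (continuous_const.mul continuous_id)).continuousAt).continuousWithinAt
          exact (hEt.mul hl).sub ((hEt.sub tendsto_const_nhds).const_mul _)
        -- Step 2: W d ≤ L
        have step2 : W d ≤ L := by
          have : Real.exp (2 * α * d) * V d ≤ Real.exp (2 * α * d) * l :=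
            mul_le_mul_of_nonneg_left hVdl (Real.exp_pos _).le
          simp only [hW, hL]
          linarith
        -- Step 3: pick s ∈ (a, d) with no jump points in (s, d)
        have hSfin : (D ∩ Set.Ioo a d).Finite :=
          hf.subset (fun x hx => ⟨hx.1, hx.2.1, hx.2.2.le.trans hdb⟩)
        set m : ℝ := if hS : hSfin.toFinset.Nonempty then hSfin.toFinset.max' hS else a with hm
        have hm_lt : a ≤ m ∧ m < d := by
          by_cases hS : hSfin.toFinset.Nonempty
          · have : m ∈ D ∩ Set.Ioo a d := by
              rw [hm, dif_pos hS]
              exact hSfin.mem_toFinset.mp (hSfin.toFinset.max'_mem hS)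
            exact ⟨this.2.1.le, this.2.2⟩
          · rw [hm, dif_neg hS]; exact ⟨le_refl a, had⟩
        have hm_max : ∀ x ∈ D ∩ Set.Ioo a d, x ≤ m := by
          intro x hx
          have hS : hSfin.toFinset.Nonempty := ⟨x, hSfin.mem_toFinset.mpr hx⟩
          rw [hm, dif_pos hS]
          exact hSfin.toFinset.le_max' x (hSfin.mem_toFinset.mpr hx)
        set s : ℝ := (m + d) / 2 with hs
        have hms : m < s := by rw [hs]; linarith [hm_lt.2]
        have hsd : s < d := by rw [hs]; linarith [hm_lt.2]
        have has : a < s := lt_of_le_of_lt hm_lt.1 hms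
        have hnoD' : D ∩ Set.Ioo s d = ∅ := by
          ext x
          simp only [Set.mem_inter_iff, Set.mem_Ioo, Set.mem_empty_iff_false, iff_false]
          rintro ⟨hxD, hx1, hx2⟩
          have : x ≤ m := hm_max x ⟨hxD, has.trans hx1, hx2⟩
          linarith
        -- W t ≤ W s for t ∈ (s, d)
        have hWsle : ∀ t ∈ Set.Ioo s d, W t ≤ W s := by
          intro t ht
          apply base s t (ha.trans has.le) ht.1.le
          ext x
          simp only [Set.mem_inter_iff, Set.mem_Ioc, Set.mem_empty_iff_false, iff_false]
          rintro ⟨hxD, hx1, hx2⟩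
          have : x ∈ D ∩ Set.Ioo s d := ⟨hxD, hx1, lt_of_le_of_lt hx2 ht.2⟩
          simp [hnoD'] at this
        -- Step 3': L ≤ W s
        have step3 : L ≤ W s := by
          refine le_of_tendsto hWtendsto ?_
          have hmem : Set.Ioo s d ∈ nhdsWithin d (Set.Iio d) := by
            rw [← Set.Iio_inter_Ioi, Set.inter_comm]
            exact Filter.inter_mem (mem_nhdsWithin_of_mem_nhds (Ioi_mem_nhds hsd))
              self_mem_nhdsWithin
          filter_upwards [hmem] with t ht
          exact hWsle t ht
        -- Step 4: W s ≤ W a by induction hypothesis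
        have hsfin : (D ∩ Set.Ioc a s).Finite :=
          hf.subset (fun x hx => ⟨hx.1, hx.2.1, hx.2.2.trans (hsd.le.trans hdb)⟩)
        have step4 : W s ≤ W a := by
          apply ih a s ha has.le hsfin
          have hsub : hsfin.toFinset ⊆ hf.toFinset.erase d := by
            intro x hx
            have hx' : x ∈ D ∩ Set.Ioc a s := hsfin.mem_toFinset.mp hx
            refine Finset.mem_erase.mpr ⟨?_, hf.mem_toFinset.mpr
              ⟨hx'.1, hx'.2.1, hx'.2.2.trans (hsd.le.trans hdb)⟩⟩
            intro hxd
            rw [hxd] at hx'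
            exact absurd hx'.2.2 (not_le.mpr hsd)
          calc hsfin.toFinset.card ≤ (hf.toFinset.erase d).card := Finset.card_le_card hsub
            _ ≤ hf.toFinset.card - 1 := le_of_eq (Finset.card_erase_of_mem
                (hf.mem_toFinset.mpr hdmem))
            _ ≤ n := by omega
        linarith
  -- conclude
  intro t ht
  have hfin : (D ∩ Set.Ioc 0 t).Finite :=
    hDfin (Set.Ioc 0 t) (Metric.isBounded_Ioc 0 t)
  have hWt : W t ≤ W 0 := key hfin.toFinset.card 0 t le_rfl ht hfin le_rfl
  have hW0 : W 0 = V 0 := by simp [hW]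
  have hE : (0:ℝ) < Real.exp (2 * α * t) := Real.exp_pos _
  have hEneg : Real.exp (-(2 * α * t)) = (Real.exp (2 * α * t))⁻¹ := Real.exp_neg _
  have hmain : V t ≤ Real.exp (-(2 * α * t)) * V 0 +
      (c / (2 * α)) * (1 - Real.exp (-(2 * α * t))) := by
    rw [hW0, hW] at hWt
    simp only at hWt
    rw [hEneg]
    have hEi : (0:ℝ) < (Real.exp (2 * α * t))⁻¹ := inv_pos.mpr hE
    have hvt : V t = (Real.exp (2 * α * t))⁻¹ * (Real.exp (2 * α * t) * V t) := by
      rw [← mul_assoc, inv_mul_cancel₀ hE.ne', one_mul]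
    rw [hvt]
    calc (Real.exp (2 * α * t))⁻¹ * (Real.exp (2 * α * t) * V t)
        ≤ (Real.exp (2 * α * t))⁻¹ * (V 0 + c / (2 * α) * (Real.exp (2 * α * t) - 1)) := by
          apply mul_le_mul_of_nonneg_left _ hEi.le
          linarith
      _ = (Real.exp (2 * α * t))⁻¹ * V 0 + c / (2 * α) * (1 - (Real.exp (2 * α * t))⁻¹) := by
          field_simp
  refine ⟨hmain, hmain.trans ?_⟩
  have h3 : (0:ℝ) ≤ Real.exp (-(2 * α * t)) := (Real.exp_pos _).le
  have h4 : 0 ≤ c / (2 * α) := by positivity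
  nlinarith
end
end

section
/- Let φ, e : [0,∞) → ℝⁿ be continuous functions such that ‖φ(s)‖² + ‖e(s)‖² ≤ M·e^{−2αs}·R² for all s ≥ 0. Then for every τ > 0, |(1/τ)·∫₀^τ (φ(s)+e(s))ᵀ·CᵀC·(φ(s)+e(s)) ds − (1/τ)·∫₀^τ φ(s)ᵀ·CᵀC·φ(s) ds| ≤ (3·M·‖CᵀC‖·R²/(2ατ))·(1 − e^{−2ατ}) ≤ 3·M·‖CᵀC‖·R²/(2ατ). -/
open Matrix

noncomputable section

attribute [local instance] Matrix.normedAddCommGroup Matrix.normedSpace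

lemma quad_abs_le {n : ℕ} (A : Matrix (Fin n) (Fin n) ℝ) (v w : Fin n → ℝ) :
    |v ⬝ᵥ A.mulVec w| ≤ sNorm A * ‖(WithLp.equiv 2 (Fin n → ℝ)).symm v‖ *
      ‖(WithLp.equiv 2 (Fin n → ℝ)).symm w‖ := by
  have h1 : v ⬝ᵥ A.mulVec w =
      (inner ℝ ((WithLp.equiv 2 (Fin n → ℝ)).symm v)
        (Matrix.toEuclideanCLM (𝕜 := ℝ) A ((WithLp.equiv 2 (Fin n → ℝ)).symm w)) : ℝ) := by
    exact (Matrix.inner_toEuclideanCLM A _ _).symm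
  rw [h1]
  calc _ ≤ ‖(WithLp.equiv 2 (Fin n → ℝ)).symm v‖ *
        ‖Matrix.toEuclideanCLM (𝕜 := ℝ) A ((WithLp.equiv 2 (Fin n → ℝ)).symm w)‖ :=
        abs_real_inner_le_norm _ _
    _ ≤ ‖(WithLp.equiv 2 (Fin n → ℝ)).symm v‖ * (sNorm A * ‖(WithLp.equiv 2 (Fin n → ℝ)).symm w‖) := by
        gcongr
        exact (Matrix.toEuclideanCLM (𝕜 := ℝ) A).le_opNorm _
    _ = _ := by ring

lemma dot_self_eq_norm_sq {n : ℕ} (v : Fin n → ℝ) :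
    v ⬝ᵥ v = ‖(WithLp.equiv 2 (Fin n → ℝ)).symm v‖ ^ 2 := by
  have := EuclideanSpace.inner_toLp_toLp (𝕜 := ℝ) v v
  rw [real_inner_self_eq_norm_sq] at this
  simpa [dotProduct] using this.symm

set_option maxHeartbeats 1000000 in
/-- The average-cost error bound from Theorem 1 (Objective 2): under the exponential
decay bound ‖φ(s)‖² + ‖e(s)‖² ≤ M·e^{−2αs}·R², the deviation between the actual
average cost (with x = φ + e) and its observer-based estimate is explicitly bounded.
Here `v ⬝ᵥ v` is the squared Euclidean norm of `v`. -/
theorem stmt14 {n p : ℕ} (hn : 1 ≤ n) (hp : 1 ≤ p) (C : Matrix (Fin p) (Fin n) ℝ)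
    (α M R : ℝ) (hα : 0 < α) (hM : 0 < M) (hR : 0 < R)
    (φ e : ℝ → Fin n → ℝ) (hφ : Continuous φ) (he : Continuous e)
    (hdecay : ∀ s ≥ (0:ℝ), φ s ⬝ᵥ φ s + e s ⬝ᵥ e s ≤ M * Real.exp (-(2 * α * s)) * R ^ 2) :
    ∀ τ > (0:ℝ),
      |(1 / τ) * (∫ s in (0:ℝ)..τ, (φ s + e s) ⬝ᵥ (Cᵀ * C).mulVec (φ s + e s))
          - (1 / τ) * (∫ s in (0:ℝ)..τ, φ s ⬝ᵥ (Cᵀ * C).mulVec (φ s))|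
        ≤ (3 * M * sNorm (Cᵀ * C) * R ^ 2 / (2 * α * τ)) * (1 - Real.exp (-(2 * α * τ)))
      ∧ (3 * M * sNorm (Cᵀ * C) * R ^ 2 / (2 * α * τ)) * (1 - Real.exp (-(2 * α * τ)))
          ≤ 3 * M * sNorm (Cᵀ * C) * R ^ 2 / (2 * α * τ) := by
  intro τ hτ
  set S := Cᵀ * C with hS
  set N := sNorm S with hN
  have hN0 : 0 ≤ N := norm_nonneg _
  -- pointwise bound on the difference of quadratic forms
  have key : ∀ s ≥ (0:ℝ),
      |(φ s + e s) ⬝ᵥ S.mulVec (φ s + e s) - φ s ⬝ᵥ S.mulVec (φ s)|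
        ≤ 3 * N * (M * Real.exp (-(2 * α * s)) * R ^ 2) := by
    intro s hs
    set a := ‖(WithLp.equiv 2 (Fin n → ℝ)).symm (φ s)‖ with ha
    set b := ‖(WithLp.equiv 2 (Fin n → ℝ)).symm (e s)‖ with hb
    have ha0 : 0 ≤ a := norm_nonneg _
    have hb0 : 0 ≤ b := norm_nonneg _
    have hK : a ^ 2 + b ^ 2 ≤ M * Real.exp (-(2 * α * s)) * R ^ 2 := by
      rw [← dot_self_eq_norm_sq, ← dot_self_eq_norm_sq]; exact hdecay s hs
    have hexpand : (φ s + e s) ⬝ᵥ S.mulVec (φ s + e s) - φ s ⬝ᵥ S.mulVec (φ s)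
        = φ s ⬝ᵥ S.mulVec (e s) + e s ⬝ᵥ S.mulVec (φ s) + e s ⬝ᵥ S.mulVec (e s) := by
      rw [Matrix.mulVec_add, dotProduct_add, add_dotProduct,
        add_dotProduct]
      ring
    rw [hexpand]
    have h1 := quad_abs_le S (φ s) (e s)
    have h2 := quad_abs_le S (e s) (φ s)
    have h3 := quad_abs_le S (e s) (e s)
    have habs : |φ s ⬝ᵥ S.mulVec (e s) + e s ⬝ᵥ S.mulVec (φ s) + e s ⬝ᵥ S.mulVec (e s)|
        ≤ N * a * b + N * b * a + N * b * b :=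
      (abs_add_le _ _).trans (by
        gcongr
        exact (abs_add_le _ _).trans (by gcongr))
    refine habs.trans ?_
    have h2ab : 2 * (a * b) ≤ a ^ 2 + b ^ 2 := by nlinarith [two_mul_le_add_sq a b]
    have hbb : b * b ≤ a ^ 2 + b ^ 2 := by nlinarith
    calc N * a * b + N * b * a + N * b * b = N * (2 * (a * b)) + N * (b * b) := by ring
      _ ≤ N * (a ^ 2 + b ^ 2) + N * (2 * (a ^ 2 + b ^ 2)) := by nlinarith
      _ = 3 * N * (a ^ 2 + b ^ 2) := by ring
      _ ≤ 3 * N * (M * Real.exp (-(2 * α * s)) * R ^ 2) := by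
          have : (0:ℝ) ≤ 3 * N := by linarith
          exact mul_le_mul_of_nonneg_left hK this
  -- continuity / integrability
  have hφi : ∀ i, Continuous fun s => φ s i := fun i => (continuous_apply i).comp hφ
  have hei : ∀ i, Continuous fun s => e s i := fun i => (continuous_apply i).comp he
  have hcont1 : Continuous fun s => (φ s + e s) ⬝ᵥ S.mulVec (φ s + e s) := by
    simp only [Matrix.mulVec, dotProduct, Pi.add_apply]
    exact continuous_finset_sum _ fun i _ => ((hφi i).add (hei i)).mul
      (continuous_finset_sum _ fun j _ => continuous_const.mul ((hφi j).add (hei j)))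
  have hcont2 : Continuous fun s => φ s ⬝ᵥ S.mulVec (φ s) := by
    simp only [Matrix.mulVec, dotProduct]
    exact continuous_finset_sum _ fun i _ => (hφi i).mul
      (continuous_finset_sum _ fun j _ => continuous_const.mul (hφi j))
  have hint1 : IntervalIntegrable (fun s => (φ s + e s) ⬝ᵥ S.mulVec (φ s + e s))
      MeasureTheory.volume 0 τ := hcont1.intervalIntegrable _ _
  have hint2 : IntervalIntegrable (fun s => φ s ⬝ᵥ S.mulVec (φ s))
      MeasureTheory.volume 0 τ := hcont2.intervalIntegrable _ _
  have hintg : IntervalIntegrable (fun s => 3 * N * (M * Real.exp (-(2 * α * s)) * R ^ 2))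
      MeasureTheory.volume 0 τ := by
    apply Continuous.intervalIntegrable
    continuity
  -- the exponential integral
  have h2α : (-(2 * α)) ≠ 0 := by
    have : (0:ℝ) < 2 * α := by linarith
    simpa using this.ne'
  have hexp_int : (∫ s in (0:ℝ)..τ, Real.exp (-(2 * α * s)))
      = (1 - Real.exp (-(2 * α * τ))) / (2 * α) := by
    have hfun : (fun s : ℝ => Real.exp (-(2 * α * s))) =
        fun s : ℝ => Real.exp ((-(2 * α)) * s) := by
      funext s; congr 1; ring
    rw [hfun, intervalIntegral.integral_comp_mul_left Real.exp h2α,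
      integral_exp]
    have : (-(2 * α)) * τ = -(2 * α * τ) := by ring
    rw [this]
    rw [smul_eq_mul]
    field_simp
    simp only [mul_zero, neg_zero, Real.exp_zero]
    ring
  have hGint : (∫ s in (0:ℝ)..τ, 3 * N * (M * Real.exp (-(2 * α * s)) * R ^ 2))
      = 3 * N * M * R ^ 2 * ((1 - Real.exp (-(2 * α * τ))) / (2 * α)) := by
    have : (fun s : ℝ => 3 * N * (M * Real.exp (-(2 * α * s)) * R ^ 2)) =
        fun s : ℝ => (3 * N * M * R ^ 2) * Real.exp (-(2 * α * s)) := by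
      funext s; ring
    rw [this, intervalIntegral.integral_const_mul, hexp_int]
  have hexp_le_one : Real.exp (-(2 * α * τ)) ≤ 1 := by
    rw [Real.exp_le_one_iff]
    nlinarith
  have hone_pos : 0 ≤ 1 - Real.exp (-(2 * α * τ)) := by linarith
  constructor
  · have hdiff : (1 / τ) * (∫ s in (0:ℝ)..τ, (φ s + e s) ⬝ᵥ S.mulVec (φ s + e s))
        - (1 / τ) * (∫ s in (0:ℝ)..τ, φ s ⬝ᵥ S.mulVec (φ s))
        = (1 / τ) * (∫ s in (0:ℝ)..τ,
            ((φ s + e s) ⬝ᵥ S.mulVec (φ s + e s) - φ s ⬝ᵥ S.mulVec (φ s))) := by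
      rw [intervalIntegral.integral_sub hint1 hint2]; ring
    rw [hdiff, abs_mul]
    have hτabs : |1 / τ| = 1 / τ := abs_of_pos (by positivity)
    rw [hτabs]
    have hb : |∫ s in (0:ℝ)..τ,
        ((φ s + e s) ⬝ᵥ S.mulVec (φ s + e s) - φ s ⬝ᵥ S.mulVec (φ s))|
        ≤ 3 * N * M * R ^ 2 * ((1 - Real.exp (-(2 * α * τ))) / (2 * α)) := by
      have := intervalIntegral.norm_integral_le_abs_of_norm_le
        (μ := MeasureTheory.volume) (a := (0:ℝ)) (b := τ)
        (f := fun s => (φ s + e s) ⬝ᵥ S.mulVec (φ s + e s) - φ s ⬝ᵥ S.mulVec (φ s))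
        (g := fun s => 3 * N * (M * Real.exp (-(2 * α * s)) * R ^ 2))
        ?_ hintg
      · rw [Real.norm_eq_abs] at this
        refine this.trans ?_
        rw [hGint, abs_of_nonneg (by positivity)]
      · filter_upwards [MeasureTheory.ae_restrict_mem measurableSet_uIoc] with s hs
        have hs0 : (0:ℝ) ≤ s := by
          rcases Set.mem_uIoc.mp hs with h | h
          · exact le_of_lt h.1
          · linarith [h.1, hτ]
        simpa [Real.norm_eq_abs] using key s hs0
    calc (1 / τ) * |∫ s in (0:ℝ)..τ,
          ((φ s + e s) ⬝ᵥ S.mulVec (φ s + e s) - φ s ⬝ᵥ S.mulVec (φ s))|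
        ≤ (1 / τ) * (3 * N * M * R ^ 2 * ((1 - Real.exp (-(2 * α * τ))) / (2 * α))) := by
          gcongr
      _ = (3 * M * N * R ^ 2 / (2 * α * τ)) * (1 - Real.exp (-(2 * α * τ))) := by
          field_simp
  · have hc : 0 ≤ 3 * M * N * R ^ 2 / (2 * α * τ) := by positivity
    exact mul_le_of_le_one_right hc (by nlinarith [Real.exp_pos (-(2 * α * τ))])
end
end
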